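/- Let k ≥ 1, let a_1 > a_2 > ⋯ > a_k ≥ 0 be a strictly decreasing sequence of non-negative integers, let r ≥ a_1 + 1, and set b_j = r − 1 − a_{k+1−j} for 1 ≤ j ≤ k. Let λ be the partition with Frobenius coordinates (a_1,…,a_k | b_1,…,b_k), i.e., the partition of n = kr with Durfee square size k satisfying λ_i = a_i + i and λ'_j = b_j + j for all 1 ≤ i,j ≤ k. Then Y_λ has exactly k cells of hook length r (equivalently, exactly k rim hooks of length r), namely the cells (p, k+1−p) for p = 1,…,k. -/
import Mathlib


/-- The hook length of the cell `c = (i, j)` of a Young diagram `μ`, in 0-indexed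
coordinates: `(μ.rowLen i − j) + (μ.colLen j − i) − 1`. -/
def YoungDiagram.hookLen (μ : YoungDiagram) (c : ℕ × ℕ) : ℕ :=
  (μ.rowLen c.1 - c.2) + (μ.colLen c.2 - c.1) - 1

/-- **The symmetric Frobenius-coordinate partitions have exactly `k` hooks of length `r`.**
Let `k ≥ 1`, let `a 0 > a 1 > ⋯ > a (k−1) ≥ 0` (0-indexed) be strictly decreasing
non-negative integers, let `r ≥ a 0 + 1`, and set `b j = r − 1 − a (k−1−j)`.  Let `μ` be
the partition with Frobenius coordinates `(a | b)`: it has Durfee square size `k`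
(0-indexed: `(k−1, k−1) ∈ μ`, `(k, k) ∉ μ`), `μ.rowLen i = a i + i + 1` and
`μ.colLen j = b j + j + 1` for `i, j < k`, and `μ.card = k * r`.  Then `μ` has exactly
`k` cells of hook length `r`, namely the cells `(p, k−1−p)` for `0 ≤ p < k` (0-indexed,
i.e. the 1-indexed cells `(p, k+1−p)` for `1 ≤ p ≤ k`). -/

private lemma hookAux_step (k : ℕ) (a : ℕ → ℕ)
    (ha : ∀ i j : ℕ, i < j → j < k → a j < a i) :
    ∀ d i : ℕ, i + d < k → a (i + d) + d ≤ a i := by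
  intro d
  induction d with
  | zero => intro i _; simp
  | succ d ih =>
    intro i h
    have h1 := ha (i + d) (i + d + 1) (by omega) (by omega)
    have h2 := ih i (by omega)
    show a (i + d + 1) + (d + 1) ≤ a i
    omega

theorem hookLen_cells_of_frobenius_symmetric (k r : ℕ) (hk : 1 ≤ k) (a b : ℕ → ℕ)
    (ha : ∀ i j : ℕ, i < j → j < k → a j < a i) (hr : a 0 + 1 ≤ r)
    (hb : ∀ j : ℕ, j < k → b j = r - 1 - a (k - 1 - j))
    (μ : YoungDiagram)
    (hd₁ : (k - 1, k - 1) ∈ μ) (hd₂ : (k, k) ∉ μ)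
    (hrow : ∀ i : ℕ, i < k → μ.rowLen i = a i + i + 1)
    (hcol : ∀ j : ℕ, j < k → μ.colLen j = b j + j + 1)
    (hcard : μ.card = k * r) :
    (μ.cells.filter (fun c => μ.hookLen c = r)).card = k ∧
      μ.cells.filter (fun c => μ.hookLen c = r) =
        (Finset.range k).image (fun p => (p, k - 1 - p)) := by
  have hstep : ∀ i j : ℕ, i ≤ j → j < k → a j + (j - i) ≤ a i := by
    intro i j hij hjk
    have := hookAux_step k a ha (j - i) i (by omega)
    rwa [show i + (j - i) = j from by omega] at this
  have hainj : ∀ i j : ℕ, i < k → j < k → a i = a j → i = j := by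
    intro i j hi hj hEq
    rcases lt_trichotomy i j with h | h | h
    · have := ha i j h hj; omega
    · exact h
    · have := ha j i h hi; omega
  have hset : μ.cells.filter (fun c => μ.hookLen c = r) =
      (Finset.range k).image (fun p => (p, k - 1 - p)) := by
    ext c
    obtain ⟨i, j⟩ := c
    simp only [Finset.mem_filter, YoungDiagram.mem_cells, Finset.mem_image, Finset.mem_range]
    constructor
    · rintro ⟨hmem, hhook⟩
      have h1 : j < μ.rowLen i := (μ.mem_iff_lt_rowLen).mp hmem
      have h2 : i < μ.colLen j := (μ.mem_iff_lt_colLen).mp hmem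
      rw [YoungDiagram.hookLen] at hhook
      simp only at hhook
      by_cases hik : i < k
      · by_cases hjk : j < k
        · have hri := hrow i hik
          have hcj := hcol j hjk
          have hbj := hb j hjk
          have htk : k - 1 - j < k := by omega
          have hat : a (k - 1 - j) + (k - 1 - j) ≤ a 0 := by
            have := hstep 0 (k - 1 - j) (Nat.zero_le _) htk
            omega
          have ha0 : a i + i ≤ a 0 := by
            have := hstep 0 i (Nat.zero_le _) hik
            omega
          rw [hri, hcj, hbj] at hhook
          rw [hri] at h1
          rw [hcj, hbj] at h2
          have heq : a i = a (k - 1 - j) := by omega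
          have hit := hainj i (k - 1 - j) hik htk heq
          exact ⟨i, hik, by simp only [Prod.mk.injEq]; exact ⟨trivial, by omega⟩⟩
        · exfalso
          have hcolj : μ.colLen j ≤ k := by
            by_contra h
            exact hd₂ (μ.up_left_mem le_rfl (le_of_not_gt hjk)
              ((μ.mem_iff_lt_colLen).mpr (by omega)))
          have hri := hrow i hik
          have ha0 : a i + i ≤ a 0 := by
            have := hstep 0 i (Nat.zero_le _) hik
            omega
          rw [hri] at hhook h1
          omega
      · exfalso
        by_cases hjk : j < k
        · have hrowi : μ.rowLen i ≤ k := by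
            by_contra h
            exact hd₂ (μ.up_left_mem (le_of_not_gt hik) le_rfl
              ((μ.mem_iff_lt_rowLen).mpr (by omega)))
          have hcj := hcol j hjk
          have hbj := hb j hjk
          rw [hcj, hbj] at hhook h2
          omega
        · exact hd₂ (μ.up_left_mem (le_of_not_gt hik) (le_of_not_gt hjk) hmem)
    · rintro ⟨p, hp, hc⟩
      have hpe : p = i ∧ k - 1 - p = j := by
        simpa [Prod.mk.injEq] using hc
      obtain ⟨rfl, rfl⟩ := hpe
      have hstep1 : a (k - 1) + (k - 1 - p) ≤ a p := hstep p (k - 1) (by omega) (by omega)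
      have ha0 : a p + p ≤ a 0 := by
        have := hstep 0 p (Nat.zero_le _) hp
        omega
      have hri := hrow p hp
      have hcj := hcol (k - 1 - p) (by omega)
      have hbj := hb (k - 1 - p) (by omega)
      rw [show k - 1 - (k - 1 - p) = p from by omega] at hbj
      constructor
      · rw [μ.mem_iff_lt_rowLen, hri]
        omega
      · rw [YoungDiagram.hookLen]
        simp only
        rw [hri, hcj, hbj]
        omega
  have hinj : Function.Injective (fun p : ℕ => (p, k - 1 - p)) := by
    intro x y h
    simpa using congrArg Prod.fst h
  refine ⟨?_, hset⟩
  rw [hset, Finset.card_image_of_injective _ hinj, Finset.card_range]
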